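/- Let G be a one-clock priced timed game, r a region of G, and ℓ a location of G. Then the function ν ↦ Val_G(ℓ,ν) restricted to r is either constantly +∞ on r, constantly −∞ on r, or finite and continuous on r; moreover, in the finite case, for all ν, ν′ in the same region r, |Val_G(ℓ,ν) − Val_G(ℓ,ν′)| ≤ (w_L + K_fin)·|ν − ν′|, where w_L is the maximal absolute value of a location weight and K_fin is the maximal absolute value of the slopes of the final cost functions. -/

import Mathlib

/-!
One-clock priced timed games (PTGs) with guards and resets, following
"One-Clock Priced Timed Games with Negative Weights"
(Brihaye, Geeraerts, Haddad, Lefaucheux, Monmege).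
-/

noncomputable section
open scoped Classical

/-- A guard: an interval with rational endpoints, each of which may be open or
closed. -/
structure Guard where
  lo : ℚ
  hi : ℚ
  loOpen : Bool
  hiOpen : Bool

/-- Membership of a real clock value in a guard. -/
def Guard.Mem (g : Guard) (x : ℝ) : Prop :=
  (if g.loOpen then (g.lo : ℝ) < x else (g.lo : ℝ) ≤ x) ∧
  (if g.hiOpen then x < (g.hi : ℝ) else x ≤ (g.hi : ℝ))

/-- A one-clock priced timed game.  Locations are partitioned into those of player
Min, player Max and the final ones; some non-final locations are urgent.
Transitions (indexed by the finite type `TI`) carry a guard, a reset flag and an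
integer weight; non-final locations carry integer rates; final locations carry
affine final cost functions with rational coefficients.  All guards are contained in
`[0, M]`. -/
structure PTG where
  Loc : Type
  [fintypeLoc : Fintype Loc]
  [decEqLoc : DecidableEq Loc]
  TI : Type
  [fintypeTI : Fintype TI]
  isMin : Loc → Prop
  isMax : Loc → Prop
  isFin : Loc → Prop
  partition : ∀ ℓ, (isMin ℓ ∧ ¬isMax ℓ ∧ ¬isFin ℓ) ∨ (¬isMin ℓ ∧ isMax ℓ ∧ ¬isFin ℓ) ∨
    (¬isMin ℓ ∧ ¬isMax ℓ ∧ isFin ℓ)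
  isUrg : Loc → Prop
  urg_not_fin : ∀ ℓ, isUrg ℓ → ¬isFin ℓ
  M : ℕ
  src : TI → Loc
  guard : TI → Guard
  reset : TI → Bool
  tgt : TI → Loc
  src_not_fin : ∀ δ, ¬isFin (src δ)
  guard_in_range : ∀ δ, (0 : ℚ) ≤ (guard δ).lo ∧ (guard δ).hi ≤ (M : ℚ) ∧
    (guard δ).lo ≤ (guard δ).hi
  finSlope : Loc → ℚ
  finIntercept : Loc → ℚ
  locWt : Loc → ℤ
  transWt : TI → ℤ

attribute [instance] PTG.fintypeLoc PTG.decEqLoc PTG.fintypeTI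

namespace PTG

/-- The final cost function `φ_ℓ`. -/
def finalCost (G : PTG) (ℓ : G.Loc) (ν : ℝ) : ℝ :=
  (G.finSlope ℓ : ℝ) * ν + (G.finIntercept ℓ : ℝ)

/-- A configuration: a location together with a clock value. -/
abbrev Conf (G : PTG) := G.Loc × ℝ

def validConf (G : PTG) (s : G.Conf) : Prop := 0 ≤ s.2 ∧ s.2 ≤ (G.M : ℝ)

/-- A move: a delay `t` together with a transition `δ`. -/
structure Move (G : PTG) where
  t : ℝ
  δ : G.TI

/-- Availability of a move. -/
def canMove (G : PTG) (s : G.Conf) (m : G.Move) : Prop :=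
  G.src m.δ = s.1 ∧ 0 ≤ m.t ∧ (G.guard m.δ).Mem (s.2 + m.t) ∧ (G.isUrg s.1 → m.t = 0)

/-- Cost `π(δ) + t·π(ℓ)` of a move. -/
def moveCost (G : PTG) (s : G.Conf) (m : G.Move) : ℝ :=
  (G.transWt m.δ : ℝ) + m.t * (G.locWt s.1 : ℝ)

/-- Successor configuration (the clock is reset if the transition asks for it). -/
def applyMove (G : PTG) (s : G.Conf) (m : G.Move) : G.Conf :=
  (G.tgt m.δ, if G.reset m.δ then 0 else s.2 + m.t)

def deadlock (G : PTG) (s : G.Conf) : Prop := ¬∃ m : G.Move, G.canMove s m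

/-- A finite play is represented by its initial configuration together with the
list of successive moves. -/
def ValidFrom (G : PTG) : G.Conf → List G.Move → Prop
  | _, [] => True
  | s, m :: l => G.canMove s m ∧ ValidFrom G (G.applyMove s m) l

def endConf (G : PTG) (s : G.Conf) (l : List G.Move) : G.Conf := l.foldl G.applyMove s

/-- Price of a finite play: the accumulated costs of its moves, plus the final cost
function evaluated at the last configuration if its location is final. -/
def finPrice (G : PTG) : G.Conf → List G.Move → ℝ
  | s, [] => if G.isFin s.1 then G.finalCost s.1 s.2 else 0
  | s, m :: l => G.moveCost s m + finPrice G (G.applyMove s m) l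

/-- A strategy of Min. -/
structure MinStrategy (G : PTG) where
  move : G.Conf → List G.Move → Option G.Move
  legal : ∀ s l, G.validConf s → G.ValidFrom s l → G.isMin (G.endConf s l).1 →
    ¬G.deadlock (G.endConf s l) → ∃ m, move s l = some m ∧ G.canMove (G.endConf s l) m

/-- A strategy of Max. -/
structure MaxStrategy (G : PTG) where
  move : G.Conf → List G.Move → Option G.Move
  legal : ∀ s l, G.validConf s → G.ValidFrom s l → G.isMax (G.endConf s l).1 →
    ¬G.deadlock (G.endConf s l) → ∃ m, move s l = some m ∧ G.canMove (G.endConf s l) m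

/-- One step of the play induced by a pair of strategies. -/
def step (G : PTG) (σmin : MinStrategy G) (σmax : MaxStrategy G) (s : G.Conf)
    (l : List G.Move) : List G.Move :=
  if G.deadlock (G.endConf s l) then l
  else if G.isMin (G.endConf s l).1 then
    match σmin.move s l with
    | some m => l ++ [m]
    | none => l
  else
    match σmax.move s l with
    | some m => l ++ [m]
    | none => l

/-- The successive finite prefixes of the unique completed play determined by an
initial configuration and a pair of strategies. -/
def hist (G : PTG) (σmin : MinStrategy G) (σmax : MaxStrategy G) (s : G.Conf) :
    ℕ → List G.Move
  | 0 => []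
  | n + 1 => G.step σmin σmax s (hist G σmin σmax s n)

/-- Price of the completed play determined by an initial configuration and a pair of
strategies. -/
def playCost (G : PTG) (s : G.Conf) (σmin : MinStrategy G) (σmax : MaxStrategy G) :
    EReal :=
  if h : ∃ n, G.isFin (G.endConf s (G.hist σmin σmax s n)).1 then
    ((G.finPrice s (G.hist σmin σmax s (Nat.find h)) : ℝ) : EReal)
  else ⊤

/-- Upper value. -/
def upperVal (G : PTG) (s : G.Conf) : EReal :=
  ⨅ σmin : MinStrategy G, ⨆ σmax : MaxStrategy G, G.playCost s σmin σmax

/-- The value of the game (PTGs are determined). -/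
def val (G : PTG) (ℓ : G.Loc) (ν : ℝ) : EReal := G.upperVal (ℓ, ν)

/-- The endpoints of the guards of `G`, together with `0`. -/
def endpoints (G : PTG) : Finset ℚ :=
  insert 0 ((Finset.univ.image fun δ => (G.guard δ).lo) ∪
    (Finset.univ.image fun δ => (G.guard δ).hi))

/-- The regions of `G`: the singletons `{M_i}` and the open intervals
`(M_i, M_{i+1})` between consecutive elements `M_0 = 0 < M_1 < ⋯ < M_k` of the set
of endpoints of the guards of `G` (together with `0`). -/
def IsRegion (G : PTG) (R : Set ℝ) : Prop :=
  (∃ p ∈ G.endpoints, R = {(p : ℝ)}) ∨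
  (∃ p ∈ G.endpoints, ∃ q ∈ G.endpoints, p < q ∧
    (∀ u ∈ G.endpoints, ¬(p < u ∧ u < q)) ∧ R = Set.Ioo (p : ℝ) (q : ℝ))

/-- `w_L`: the largest absolute value of a (non-final) location weight. -/
def wL (G : PTG) : ℝ :=
  ⨆ ℓ : G.Loc, if G.isFin ℓ then 0 else |(G.locWt ℓ : ℝ)|

/-- `K_fin`: the largest absolute value of a slope of a final cost function. -/
def Kfin (G : PTG) : ℝ :=
  ⨆ ℓ : G.Loc, if G.isFin ℓ then |(G.finSlope ℓ : ℝ)| else 0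

/-- `w_T` as a natural number: the largest absolute value of a transition weight. -/
def wTN (G : PTG) : ℕ := Finset.univ.sup fun δ : G.TI => (G.transWt δ).natAbs

/-- `w_L` as a natural number. -/
def wLN (G : PTG) : ℕ :=
  Finset.univ.sup fun ℓ : G.Loc => if G.isFin ℓ then 0 else (G.locWt ℓ).natAbs

variable {G : PTG}

lemma endConf_append (s : G.Conf) (l : List G.Move) (m : G.Move) :
    G.endConf s (l ++ [m]) = G.applyMove (G.endConf s l) m := by
  simp [endConf, List.foldl_append]

lemma validFrom_append {s : G.Conf} {l : List G.Move} {m : G.Move} :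
    G.ValidFrom s (l ++ [m]) ↔ G.ValidFrom s l ∧ G.canMove (G.endConf s l) m := by
  induction l generalizing s with
  | nil => simp [ValidFrom, endConf]
  | cons m0 l ih =>
    have h0 : G.endConf s (m0 :: l) = G.endConf (G.applyMove s m0) l := rfl
    simp only [List.cons_append, ValidFrom, List.append_eq, ih, h0]
    tauto

/-- Running cost (without the final cost). -/
def runC (G : PTG) : G.Conf → List G.Move → ℝ
  | _, [] => 0
  | s, m :: l => G.moveCost s m + runC G (G.applyMove s m) l

lemma runC_append (s : G.Conf) (l : List G.Move) (m : G.Move) :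
    G.runC s (l ++ [m]) = G.runC s l + G.moveCost (G.endConf s l) m := by
  induction l generalizing s with
  | nil => simp [runC, endConf]
  | cons m0 l ih =>
    have h0 : G.endConf s (m0 :: l) = G.endConf (G.applyMove s m0) l := rfl
    simp only [List.cons_append, runC, List.append_eq, ih, h0]
    ring

lemma finPrice_eq (s : G.Conf) (l : List G.Move) :
    G.finPrice s l = G.runC s l +
      (if G.isFin (G.endConf s l).1 then G.finalCost (G.endConf s l).1 (G.endConf s l).2 else 0) := by
  induction l generalizing s with
  | nil =>
    simp [finPrice, runC, endConf]
    congr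
  | cons m0 l ih =>
    have h0 : G.endConf s (m0 :: l) = G.endConf (G.applyMove s m0) l := rfl
    simp only [finPrice, runC, ih, h0]
    ring

lemma abs_locWt_le {ℓc : G.Loc} (h : ¬G.isFin ℓc) : |(G.locWt ℓc : ℝ)| ≤ G.wL := by
  have := le_ciSup (f := fun ℓ => if G.isFin ℓ then (0 : ℝ) else |(G.locWt ℓ : ℝ)|)
    (Set.Finite.bddAbove (Set.finite_range _)) ℓc
  simpa [wL, h] using this

lemma abs_finSlope_le {ℓc : G.Loc} (h : G.isFin ℓc) : |(G.finSlope ℓc : ℝ)| ≤ G.Kfin := by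
  have := le_ciSup (f := fun ℓ => if G.isFin ℓ then |(G.finSlope ℓ : ℝ)| else (0 : ℝ))
    (Set.Finite.bddAbove (Set.finite_range _)) ℓc
  simpa [Kfin, h] using this

lemma wL_nonneg : 0 ≤ G.wL :=
  Real.iSup_nonneg fun ℓ => by positivity

lemma Kfin_nonneg : 0 ≤ G.Kfin :=
  Real.iSup_nonneg fun ℓ => by positivity

/-- The facts about a region that the simulation argument uses. -/
structure RegionFacts (G : PTG) (R : Set ℝ) : Prop where
  nonempty : R.Nonempty
  subset : ∀ x ∈ R, 0 ≤ x ∧ x ≤ (G.M : ℝ)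
  conn : ∀ x ∈ R, ∀ y ∈ R, ∀ z : ℝ, x ≤ z → z ≤ y → z ∈ R
  sat : ∀ δ : G.TI, ∀ z ∈ R, (G.guard δ).Mem z → ∀ w ∈ R, (G.guard δ).Mem w

lemma endpoint_bounds {p : ℚ} (hp : p ∈ G.endpoints) : 0 ≤ p ∧ p ≤ (G.M : ℚ) := by
  have hM : (0:ℚ) ≤ (G.M:ℚ) := by positivity
  simp only [endpoints, Finset.mem_insert, Finset.mem_union, Finset.mem_image,
    Finset.mem_univ, true_and] at hp
  rcases hp with rfl | ⟨δ, rfl⟩ | ⟨δ, rfl⟩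
  · exact ⟨le_refl _, hM⟩
  · obtain ⟨h1, h2, h3⟩ := G.guard_in_range δ
    exact ⟨h1, h3.trans h2⟩
  · obtain ⟨h1, h2, h3⟩ := G.guard_in_range δ
    exact ⟨h1.trans h3, h2⟩

lemma lo_mem_endpoints (δ : G.TI) : (G.guard δ).lo ∈ G.endpoints := by
  simp only [endpoints, Finset.mem_insert, Finset.mem_union, Finset.mem_image,
    Finset.mem_univ, true_and]
  exact Or.inr (Or.inl ⟨δ, rfl⟩)

lemma hi_mem_endpoints (δ : G.TI) : (G.guard δ).hi ∈ G.endpoints := by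
  simp only [endpoints, Finset.mem_insert, Finset.mem_union, Finset.mem_image,
    Finset.mem_univ, true_and]
  exact Or.inr (Or.inr ⟨δ, rfl⟩)

lemma isRegion_facts {R : Set ℝ} (hR : G.IsRegion R) : RegionFacts G R := by
  rcases hR with ⟨p, hp, rfl⟩ | ⟨p, hp, q, hq, hpq, hmid, rfl⟩
  · obtain ⟨h0, hM⟩ := endpoint_bounds hp
    refine ⟨⟨p, rfl⟩, ?_, ?_, ?_⟩
    · rintro x rfl
      exact ⟨by exact_mod_cast h0, by exact_mod_cast hM⟩
    · rintro x rfl y rfl z h1 h2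
      exact le_antisymm h2 h1
    · rintro δ z rfl hz w rfl
      exact hz
  · obtain ⟨hp0, _⟩ := endpoint_bounds hp
    obtain ⟨_, hqM⟩ := endpoint_bounds hq
    have hpq' : (p:ℝ) < (q:ℝ) := by exact_mod_cast hpq
    refine ⟨⟨(p+q)/2, by constructor <;> push_cast <;> linarith⟩, ?_, ?_, ?_⟩
    · rintro x ⟨h1, h2⟩
      constructor
      · have : (0:ℝ) ≤ (p:ℝ) := by exact_mod_cast hp0
        linarith
      · have : (q:ℝ) ≤ (G.M:ℝ) := by exact_mod_cast hqM
        linarith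
    · rintro x ⟨h1, h2⟩ y ⟨h3, h4⟩ z h5 h6
      exact ⟨lt_of_lt_of_le h1 h5, lt_of_le_of_lt h6 h4⟩
    · rintro δ z ⟨hz1, hz2⟩ hmem w ⟨hw1, hw2⟩
      obtain ⟨hlo, hhi⟩ := hmem
      -- lo ≤ p
      have hlop : ((G.guard δ).lo : ℝ) ≤ p := by
        by_contra hcon
        push_neg at hcon
        have hloq : ((G.guard δ).lo : ℚ) < q := by
          have : ((G.guard δ).lo : ℝ) < q := by
            rcases Bool.eq_false_or_eq_true (G.guard δ).loOpen with hb | hb <;>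
              simp [hb] at hlo <;> linarith
          exact_mod_cast this
        exact hmid _ (lo_mem_endpoints δ) ⟨by exact_mod_cast hcon, hloq⟩
      have hqhi : (q:ℝ) ≤ ((G.guard δ).hi : ℝ) := by
        by_contra hcon
        push_neg at hcon
        have hphi : (p : ℚ) < (G.guard δ).hi := by
          have : (p:ℝ) < ((G.guard δ).hi : ℝ) := by
            rcases Bool.eq_false_or_eq_true (G.guard δ).hiOpen with hb | hb <;>
              simp [hb] at hhi <;> linarith
          exact_mod_cast this
        exact hmid _ (hi_mem_endpoints δ) ⟨hphi, by exact_mod_cast hcon⟩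
      refine ⟨?_, ?_⟩
      · by_cases hb : (G.guard δ).loOpen = true
        · rw [if_pos hb]; linarith
        · rw [if_neg hb]; linarith
      · by_cases hb : (G.guard δ).hiOpen = true
        · rw [if_pos hb]; linarith
        · rw [if_neg hb]; linarith

/-- Default legal move, used as fallback in constructed strategies. -/
def defMove (G : PTG) (s : G.Conf) : Option G.Move :=
  if h : ∃ m, G.canMove s m then some h.choose else none

lemma defMove_spec {s : G.Conf} (h : ¬G.deadlock s) :
    ∃ m, G.defMove s = some m ∧ G.canMove s m := by
  rw [deadlock, not_not] at h
  exact ⟨h.choose, by rw [defMove, dif_pos h], h.choose_spec⟩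

/-- Translation of a delay from clock value `x` to clock value `x'`. -/
def trT (G : PTG) (ℓc : G.Loc) (x x' t : ℝ) : ℝ :=
  if G.isUrg ℓc then 0 else max 0 (x + t - x')

/-- The core one-step translation lemma. -/
lemma translate {R : Set ℝ} (hRF : RegionFacts G R) {x x' : ℝ}
    (hrel : x = x' ∨ (x ∈ R ∧ x' ∈ R)) {ℓc : G.Loc} {m : G.Move}
    (hm : G.canMove (ℓc, x) m) :
    G.canMove (ℓc, x') ⟨G.trT ℓc x x' m.t, m.δ⟩ ∧
    |G.trT ℓc x x' m.t - m.t| + |(x' + G.trT ℓc x x' m.t) - (x + m.t)| ≤ |x' - x| ∧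
    ((x' + G.trT ℓc x x' m.t) = (x + m.t) ∨
      ((x + m.t) ∈ R ∧ (x' + G.trT ℓc x x' m.t) ∈ R)) := by
  obtain ⟨hsrc, ht0, hmem, hurg⟩ := hm
  simp only at hsrc hmem hurg
  have hcan : (0:ℝ) ≤ G.trT ℓc x x' m.t →
      (G.guard m.δ).Mem (x' + G.trT ℓc x x' m.t) →
      G.canMove (ℓc, x') ⟨G.trT ℓc x x' m.t, m.δ⟩ :=
    fun h1 h2 => ⟨hsrc, h1, h2, fun hu => by rw [trT, if_pos hu]⟩
  by_cases hu : G.isUrg ℓc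
  · have ht : m.t = 0 := hurg hu
    have htr : G.trT ℓc x x' m.t = 0 := by rw [trT, if_pos hu]
    rw [ht, add_zero] at hmem
    have hmem' : (G.guard m.δ).Mem (x' + G.trT ℓc x x' m.t) := by
      rw [htr, add_zero]
      rcases hrel with rfl | ⟨hx, hx'⟩
      · exact hmem
      · exact hRF.sat m.δ x hx hmem x' hx'
    refine ⟨hcan htr.ge hmem', ?_, ?_⟩
    · rw [htr, ht]
      simp [abs_sub_comm]
    · rw [htr, ht, add_zero, add_zero]
      rcases hrel with rfl | ⟨hx, hx'⟩
      · exact Or.inl rfl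
      · exact Or.inr ⟨hx, hx'⟩
  · have htr : G.trT ℓc x x' m.t = max 0 (x + m.t - x') := by rw [trT, if_neg hu]
    by_cases hge : x' ≤ x + m.t
    · have htr' : G.trT ℓc x x' m.t = x + m.t - x' := by
        rw [htr, max_eq_right]; linarith
      have hy : x' + G.trT ℓc x x' m.t = x + m.t := by rw [htr']; ring
      refine ⟨hcan (by rw [htr']; linarith) (by rw [hy]; exact hmem), ?_, Or.inl hy⟩
      rw [hy, htr']
      have h1 : x + m.t - x' - m.t = x - x' := by ring
      rw [h1, sub_self, abs_zero, add_zero, abs_sub_comm]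
    · push_neg at hge
      have htr' : G.trT ℓc x x' m.t = 0 := by rw [htr, max_eq_left]; linarith
      have hxx' : x ≠ x' := by intro h; rw [h] at hge; linarith
      obtain ⟨hx, hx'⟩ : x ∈ R ∧ x' ∈ R := hrel.resolve_left hxx'
      have hyR : x + m.t ∈ R := hRF.conn x hx x' hx' _ (by linarith) (by linarith)
      refine ⟨hcan htr'.ge ?_, ?_, Or.inr ⟨hyR, by rw [htr', add_zero]; exact hx'⟩⟩
      · rw [htr', add_zero]
        exact hRF.sat m.δ (x + m.t) hyR hmem x' hx'
      · rw [htr']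
        rw [abs_of_nonpos (by linarith), abs_of_nonneg (by linarith),
          abs_of_nonneg (by linarith)]
        linarith

section Sim

variable (G)
variable (σmin : MinStrategy G) (σmax' : MaxStrategy G) (ℓ : G.Loc) (ν ν' : ℝ)

/-- One step of the reconstruction of the `ν`-side history from a `ν'`-side
history. -/
def mstep (acc : List G.Move) (s' : G.Conf) (m' : G.Move) : G.Move :=
  let e := G.endConf (ℓ, ν) acc
  if G.isMin e.1 then
    match σmin.move (ℓ, ν) acc with
    | some mm => mm
    | none => ⟨0, m'.δ⟩
  else ⟨G.trT e.1 s'.2 e.2 m'.t, m'.δ⟩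

/-- Reconstruction of the `ν`-side history from a `ν'`-side history. -/
def mirrorAux : List G.Move → G.Conf → List G.Move → List G.Move
  | acc, _, [] => acc
  | acc, s', m' :: rest =>
      mirrorAux (acc ++ [mstep G σmin ℓ ν acc s' m']) (G.applyMove s' m') rest

def mirror (l' : List G.Move) : List G.Move := mirrorAux G σmin ℓ ν [] (ℓ, ν') l'

lemma mirrorAux_append (acc : List G.Move) (s' : G.Conf) (l' : List G.Move)
    (m' : G.Move) :
    mirrorAux G σmin ℓ ν acc s' (l' ++ [m']) =
      mirrorAux G σmin ℓ ν acc s' l' ++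
        [mstep G σmin ℓ ν (mirrorAux G σmin ℓ ν acc s' l') (G.endConf s' l') m'] := by
  induction l' generalizing acc s' with
  | nil => rfl
  | cons m0 rest ih =>
    show mirrorAux G σmin ℓ ν (acc ++ [_]) (G.applyMove s' m0) (rest ++ [m']) = _
    rw [ih]
    rfl

lemma mirror_append (l' : List G.Move) (m' : G.Move) :
    mirror G σmin ℓ ν ν' (l' ++ [m']) =
      mirror G σmin ℓ ν ν' l' ++
        [mstep G σmin ℓ ν (mirror G σmin ℓ ν ν' l') (G.endConf (ℓ, ν') l') m'] :=
  mirrorAux_append G σmin ℓ ν _ _ _ _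

/-- Min's strategy at `ν'` mimicking `σmin` (which plays from `ν`). -/
def minTrans : MinStrategy G where
  move := fun s' l' =>
    if s' = (ℓ, ν') then
      match σmin.move (ℓ, ν) (mirror G σmin ℓ ν ν' l') with
      | some m =>
        let e := G.endConf (ℓ, ν) (mirror G σmin ℓ ν ν' l')
        let e' := G.endConf (ℓ, ν') l'
        if G.canMove e' ⟨G.trT e.1 e.2 e'.2 m.t, m.δ⟩ then
          some ⟨G.trT e.1 e.2 e'.2 m.t, m.δ⟩
        else G.defMove e'
      | none => G.defMove (G.endConf (ℓ, ν') l')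
    else G.defMove (G.endConf s' l')
  legal := by
    intro s l hv hvf hmin hnd
    beta_reduce
    by_cases hs : s = (ℓ, ν')
    · subst hs
      rw [if_pos rfl]
      cases hσ : σmin.move (ℓ, ν) (mirror G σmin ℓ ν ν' l) with
      | none => exact defMove_spec hnd
      | some m =>
        by_cases hc : G.canMove (G.endConf (ℓ, ν') l)
            ⟨G.trT (G.endConf (ℓ, ν) (mirror G σmin ℓ ν ν' l)).1
              (G.endConf (ℓ, ν) (mirror G σmin ℓ ν ν' l)).2
              (G.endConf (ℓ, ν') l).2 m.t, m.δ⟩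
        · exact ⟨_, by simp only [if_pos hc], hc⟩
        · simp only [if_neg hc]
          exact defMove_spec hnd
    · rw [if_neg hs]
      exact defMove_spec hnd

/-- The joint evolution of the mimicking plays from `(ℓ,ν)` and `(ℓ,ν')`. -/
def pairHist : ℕ → List G.Move × List G.Move
  | 0 => ([], [])
  | n + 1 =>
    let P := pairHist n
    let e := G.endConf (ℓ, ν) P.1
    let e' := G.endConf (ℓ, ν') P.2
    if G.deadlock e then P
    else if G.isMin e.1 then
      match σmin.move (ℓ, ν) P.1 with
      | some m => (P.1 ++ [m], P.2 ++ [⟨G.trT e.1 e.2 e'.2 m.t, m.δ⟩])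
      | none => P
    else
      match σmax'.move (ℓ, ν') P.2 with
      | some m' => (P.1 ++ [⟨G.trT e.1 e'.2 e.2 m'.t, m'.δ⟩], P.2 ++ [m'])
      | none => P

lemma pairHist_succ_cases (n : ℕ) :
    pairHist G σmin σmax' ℓ ν ν' (n + 1) = pairHist G σmin σmax' ℓ ν ν' n ∨
    (∃ m m', pairHist G σmin σmax' ℓ ν ν' (n + 1) =
      ((pairHist G σmin σmax' ℓ ν ν' n).1 ++ [m],
        (pairHist G σmin σmax' ℓ ν ν' n).2 ++ [m'])) := by
  simp only [pairHist]
  split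
  · exact Or.inl rfl
  split
  · split
    all_goals first
      | exact Or.inl rfl
      | exact Or.inr ⟨_, _, rfl⟩
  · split
    all_goals first
      | exact Or.inl rfl
      | exact Or.inr ⟨_, _, rfl⟩

lemma pairHist_len_mono : Monotone fun n => (pairHist G σmin σmax' ℓ ν ν' n).1.length := by
  apply monotone_nat_of_le_succ
  intro n
  rcases pairHist_succ_cases G σmin σmax' ℓ ν ν' n with h | ⟨m, m', h⟩ <;> simp [h]

lemma pairHist_eq_of_fst_eq {m n : ℕ} (h : m ≤ n)
    (hfst : (pairHist G σmin σmax' ℓ ν ν' n).1 = (pairHist G σmin σmax' ℓ ν ν' m).1) :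
    pairHist G σmin σmax' ℓ ν ν' n = pairHist G σmin σmax' ℓ ν ν' m := by
  induction n with
  | zero => cases Nat.le_zero.1 h; rfl
  | succ n ih =>
    rcases Nat.lt_or_ge m (n + 1) with hm | hm
    · have hm' : m ≤ n := Nat.lt_succ_iff.1 hm
      have hlen1 : (pairHist G σmin σmax' ℓ ν ν' m).1.length ≤
          (pairHist G σmin σmax' ℓ ν ν' n).1.length :=
        pairHist_len_mono G σmin σmax' ℓ ν ν' hm'
      have hlen2 : (pairHist G σmin σmax' ℓ ν ν' n).1.length ≤
          (pairHist G σmin σmax' ℓ ν ν' (n+1)).1.length :=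
        pairHist_len_mono G σmin σmax' ℓ ν ν' (Nat.le_succ n)
      rcases pairHist_succ_cases G σmin σmax' ℓ ν ν' n with hc | ⟨mm, mm', hc⟩
      · rw [hc] at hfst ⊢
        exact ih hm' hfst
      · exfalso
        have : (pairHist G σmin σmax' ℓ ν ν' (n+1)).1.length =
            (pairHist G σmin σmax' ℓ ν ν' n).1.length + 1 := by simp [hc]
        rw [hfst] at this
        omega
    · have : m = n + 1 := le_antisymm h hm
      subst this; rfl

/-- Max's strategy at `ν` mimicking `σmax'` (which plays from `ν'`). -/
def maxTrans : MaxStrategy G where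
  move := fun s l =>
    if h : s = (ℓ, ν) ∧ ∃ n, (pairHist G σmin σmax' ℓ ν ν' n).1 = l then
      match σmax'.move (ℓ, ν') (pairHist G σmin σmax' ℓ ν ν' (Nat.find h.2)).2 with
      | some m' =>
        let e := G.endConf (ℓ, ν) l
        let e' := G.endConf (ℓ, ν')
          (pairHist G σmin σmax' ℓ ν ν' (Nat.find h.2)).2
        if G.canMove e ⟨G.trT e.1 e'.2 e.2 m'.t, m'.δ⟩ then
          some ⟨G.trT e.1 e'.2 e.2 m'.t, m'.δ⟩
        else G.defMove e
      | none => G.defMove (G.endConf (ℓ, ν) l)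
    else G.defMove (G.endConf s l)
  legal := by
    intro s l hv hvf hmax hnd
    beta_reduce
    by_cases hs : s = (ℓ, ν) ∧ ∃ n, (pairHist G σmin σmax' ℓ ν ν' n).1 = l
    · rw [dif_pos hs]
      have hs1 := hs.1
      subst hs1
      cases hσ : σmax'.move (ℓ, ν') (pairHist G σmin σmax' ℓ ν ν' (Nat.find hs.2)).2 with
      | none => exact defMove_spec hnd
      | some m' =>
        by_cases hc : G.canMove (G.endConf (ℓ, ν) l)
            ⟨G.trT (G.endConf (ℓ, ν) l).1
              (G.endConf (ℓ, ν') (pairHist G σmin σmax' ℓ ν ν' (Nat.find hs.2)).2).2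
              (G.endConf (ℓ, ν) l).2 m'.t, m'.δ⟩
        · exact ⟨_, by simp only [if_pos hc], hc⟩
        · simp only [if_neg hc]
          exact defMove_spec hnd
    · rw [dif_neg hs]
      exact defMove_spec hnd

end Sim

lemma translate' {R : Set ℝ} (hRF : RegionFacts G R) {s s' : G.Conf}
    (h1 : s.1 = s'.1) (hrel : s.2 = s'.2 ∨ (s.2 ∈ R ∧ s'.2 ∈ R)) {m : G.Move}
    (hm : G.canMove s m) :
    G.canMove s' ⟨G.trT s.1 s.2 s'.2 m.t, m.δ⟩ ∧
    |G.trT s.1 s.2 s'.2 m.t - m.t| + |(s'.2 + G.trT s.1 s.2 s'.2 m.t) - (s.2 + m.t)| ≤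
      |s'.2 - s.2| ∧
    ((s'.2 + G.trT s.1 s.2 s'.2 m.t) = (s.2 + m.t) ∨
      ((s.2 + m.t) ∈ R ∧ (s'.2 + G.trT s.1 s.2 s'.2 m.t) ∈ R)) := by
  obtain ⟨ℓc, x⟩ := s
  obtain ⟨ℓc', x'⟩ := s'
  simp only at h1 hrel
  subst h1
  exact translate hRF hrel hm

lemma deadlock_iff' {R : Set ℝ} (hRF : RegionFacts G R) {s s' : G.Conf}
    (h1 : s.1 = s'.1) (hrel : s.2 = s'.2 ∨ (s.2 ∈ R ∧ s'.2 ∈ R)) :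
    G.deadlock s ↔ G.deadlock s' := by
  obtain ⟨ℓc, x⟩ := s
  obtain ⟨ℓc', x'⟩ := s'
  simp only at h1 hrel
  subst h1
  constructor
  · intro h
    intro ⟨m', hm'⟩
    have hrel' : x' = x ∨ (x' ∈ R ∧ x ∈ R) := by tauto
    exact h ⟨_, (translate hRF hrel' hm').1⟩
  · intro h
    intro ⟨m, hm⟩
    exact h ⟨_, (translate hRF hrel hm).1⟩

lemma deadlock_of_isFin {s : G.Conf} (h : G.isFin s.1) : G.deadlock s := by
  intro ⟨m, hm⟩
  exact G.src_not_fin m.δ (hm.1.symm ▸ h)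

lemma numeric_update {D d dy rc rc' t t' ρ w c : ℝ}
    (hrc : |rc - rc'| ≤ w * (D - d)) (hq : |t' - t| + dy ≤ d)
    (hρ : |ρ| ≤ w) (hdy : 0 ≤ dy) :
    |(rc + (c + t * ρ)) - (rc' + (c + t' * ρ))| ≤ w * (D - dy) := by
  have h1 : |(rc + (c + t * ρ)) - (rc' + (c + t' * ρ))| ≤ |rc - rc'| + |t - t'| * |ρ| := by
    have he : (rc + (c + t * ρ)) - (rc' + (c + t' * ρ)) = (rc - rc') + (t - t') * ρ := by
      ring
    rw [he]
    exact (abs_add_le _ _).trans (by rw [abs_mul])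
  have hw : 0 ≤ w := (abs_nonneg ρ).trans hρ
  have h2 : |t - t'| * |ρ| ≤ (d - dy) * w := by
    apply mul_le_mul _ hρ (abs_nonneg _) _
    · rw [abs_sub_comm]; linarith
    · linarith [abs_nonneg (t' - t)]
  nlinarith

section Sim2

variable {G : PTG} (σmin : MinStrategy G) (σmax' : MaxStrategy G) (ℓ : G.Loc)
  (ν ν' : ℝ) {R : Set ℝ}

lemma invariant (hRF : RegionFacts G R) (hν : ν ∈ R) (hν' : ν' ∈ R) (n : ℕ) :
    G.hist σmin (G.maxTrans σmin σmax' ℓ ν ν') (ℓ, ν) n =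
      (G.pairHist σmin σmax' ℓ ν ν' n).1 ∧
    G.hist (G.minTrans σmin ℓ ν ν') σmax' (ℓ, ν') n =
      (G.pairHist σmin σmax' ℓ ν ν' n).2 ∧
    G.ValidFrom (ℓ, ν) (G.pairHist σmin σmax' ℓ ν ν' n).1 ∧
    G.ValidFrom (ℓ, ν') (G.pairHist σmin σmax' ℓ ν ν' n).2 ∧
    G.mirror σmin ℓ ν ν' (G.pairHist σmin σmax' ℓ ν ν' n).2 =
      (G.pairHist σmin σmax' ℓ ν ν' n).1 ∧
    (G.endConf (ℓ, ν) (G.pairHist σmin σmax' ℓ ν ν' n).1).1 =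
      (G.endConf (ℓ, ν') (G.pairHist σmin σmax' ℓ ν ν' n).2).1 ∧
    ((G.endConf (ℓ, ν) (G.pairHist σmin σmax' ℓ ν ν' n).1).2 =
        (G.endConf (ℓ, ν') (G.pairHist σmin σmax' ℓ ν ν' n).2).2 ∨
      ((G.endConf (ℓ, ν) (G.pairHist σmin σmax' ℓ ν ν' n).1).2 ∈ R ∧
        (G.endConf (ℓ, ν') (G.pairHist σmin σmax' ℓ ν ν' n).2).2 ∈ R)) ∧
    |(G.endConf (ℓ, ν) (G.pairHist σmin σmax' ℓ ν ν' n).1).2 -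
        (G.endConf (ℓ, ν') (G.pairHist σmin σmax' ℓ ν ν' n).2).2| ≤ |ν - ν'| ∧
    |G.runC (ℓ, ν) (G.pairHist σmin σmax' ℓ ν ν' n).1 -
        G.runC (ℓ, ν') (G.pairHist σmin σmax' ℓ ν ν' n).2| ≤
      G.wL * (|ν - ν'| -
        |(G.endConf (ℓ, ν) (G.pairHist σmin σmax' ℓ ν ν' n).1).2 -
          (G.endConf (ℓ, ν') (G.pairHist σmin σmax' ℓ ν ν' n).2).2|) := by
  induction n with
  | zero =>
    refine ⟨rfl, rfl, trivial, trivial, rfl, rfl, Or.inr ⟨hν, hν'⟩, le_rfl, ?_⟩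
    show |G.runC (ℓ, ν) [] - G.runC (ℓ, ν') []| ≤ _
    simp [runC, pairHist, endConf]
  | succ n ih =>
    obtain ⟨ih1, ih2, ih3, ih4, ih5, ih6, ih7, ih8, ih9⟩ := ih
    have hvν : G.validConf (ℓ, ν) := ⟨(hRF.subset ν hν).1, (hRF.subset ν hν).2⟩
    have hvν' : G.validConf (ℓ, ν') := ⟨(hRF.subset ν' hν').1, (hRF.subset ν' hν').2⟩
    by_cases hd : G.deadlock (G.endConf (ℓ, ν) (G.pairHist σmin σmax' ℓ ν ν' n).1)
    · -- deadlock: everything stalls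
      have hd' : G.deadlock (G.endConf (ℓ, ν') (G.pairHist σmin σmax' ℓ ν ν' n).2) :=
        (deadlock_iff' hRF ih6 ih7).1 hd
      have hPH : G.pairHist σmin σmax' ℓ ν ν' (n + 1) =
          G.pairHist σmin σmax' ℓ ν ν' n := by
        simp only [pairHist]
        rw [if_pos hd]
      have hh1 : G.hist σmin (G.maxTrans σmin σmax' ℓ ν ν') (ℓ, ν) (n + 1) =
          (G.pairHist σmin σmax' ℓ ν ν' n).1 := by
        show G.step _ _ _ (G.hist σmin (G.maxTrans σmin σmax' ℓ ν ν') (ℓ, ν) n) = _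
        rw [step, ih1, if_pos hd]
      have hh2 : G.hist (G.minTrans σmin ℓ ν ν') σmax' (ℓ, ν') (n + 1) =
          (G.pairHist σmin σmax' ℓ ν ν' n).2 := by
        show G.step _ _ _ (G.hist (G.minTrans σmin ℓ ν ν') σmax' (ℓ, ν') n) = _
        rw [step, ih2, if_pos hd']
      rw [hPH]
      exact ⟨hh1, hh2, ih3, ih4, ih5, ih6, ih7, ih8, ih9⟩
    · by_cases hm : G.isMin (G.endConf (ℓ, ν) (G.pairHist σmin σmax' ℓ ν ν' n).1).1
      · -- Min's turn
        have hd' : ¬G.deadlock (G.endConf (ℓ, ν') (G.pairHist σmin σmax' ℓ ν ν' n).2) :=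
          fun h => hd ((deadlock_iff' hRF ih6 ih7).2 h)
        have hm' : G.isMin (G.endConf (ℓ, ν') (G.pairHist σmin σmax' ℓ ν ν' n).2).1 :=
          ih6 ▸ hm
        obtain ⟨m, hσ, hcm⟩ := σmin.legal (ℓ, ν) (G.pairHist σmin σmax' ℓ ν ν' n).1
          hvν ih3 hm hd
        obtain ⟨hcm', hquant, hrel'⟩ := translate' hRF ih6 ih7 hcm
        set e := G.endConf (ℓ, ν) (G.pairHist σmin σmax' ℓ ν ν' n).1 with hedef
        set e' := G.endConf (ℓ, ν') (G.pairHist σmin σmax' ℓ ν ν' n).2 with he'def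
        set cand : G.Move := ⟨G.trT e.1 e.2 e'.2 m.t, m.δ⟩ with hcanddef
        have hPH : G.pairHist σmin σmax' ℓ ν ν' (n + 1) =
            ((G.pairHist σmin σmax' ℓ ν ν' n).1 ++ [m],
              (G.pairHist σmin σmax' ℓ ν ν' n).2 ++ [cand]) := by
          simp only [pairHist]
          rw [if_neg hd, if_pos hm, hσ]
        have hh1 : G.hist σmin (G.maxTrans σmin σmax' ℓ ν ν') (ℓ, ν) (n + 1) =
            (G.pairHist σmin σmax' ℓ ν ν' n).1 ++ [m] := by
          show G.step _ _ _ (G.hist σmin (G.maxTrans σmin σmax' ℓ ν ν') (ℓ, ν) n) = _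
          rw [step, ih1, if_neg hd, if_pos hm, hσ]
        have hmv : (G.minTrans σmin ℓ ν ν').move (ℓ, ν')
            (G.pairHist σmin σmax' ℓ ν ν' n).2 = some cand := by
          simp only [minTrans]
          split
          · simp only [ih5, hσ]
            rw [← hedef, ← he'def]
            split
            · rfl
            · exact absurd hcm' (by assumption)
          · exact absurd trivial (by assumption)
        have hh2 : G.hist (G.minTrans σmin ℓ ν ν') σmax' (ℓ, ν') (n + 1) =
            (G.pairHist σmin σmax' ℓ ν ν' n).2 ++ [cand] := by
          show G.step _ _ _ (G.hist (G.minTrans σmin ℓ ν ν') σmax' (ℓ, ν') n) = _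
          rw [step, ih2, if_neg hd', if_pos hm', hmv]
        have hmr : G.mirror σmin ℓ ν ν'
            ((G.pairHist σmin σmax' ℓ ν ν' n).2 ++ [cand]) =
            (G.pairHist σmin σmax' ℓ ν ν' n).1 ++ [m] := by
          rw [mirror_append, ih5]
          congr 1
          simp only [mstep]
          rw [← hedef, if_pos hm, hσ]
        have hE1 : G.endConf (ℓ, ν) ((G.pairHist σmin σmax' ℓ ν ν' n).1 ++ [m]) =
            G.applyMove e m := by rw [endConf_append, hedef]
        have hE2 : G.endConf (ℓ, ν') ((G.pairHist σmin σmax' ℓ ν ν' n).2 ++ [cand]) =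
            G.applyMove e' cand := by rw [endConf_append, he'def]
        have hwt : |(G.locWt e.1 : ℝ)| ≤ G.wL := by
          apply abs_locWt_le
          rw [← hcm.1]
          exact G.src_not_fin m.δ
        rw [hPH]
        simp only
        refine ⟨hh1, hh2, validFrom_append.2 ⟨ih3, hcm⟩,
          validFrom_append.2 ⟨ih4, hcm'⟩, hmr, ?_, ?_, ?_, ?_⟩
        · rw [hE1, hE2]; rfl
        · rw [hE1, hE2]
          cases hrst : G.reset m.δ with
          | true => exact Or.inl (by simp [applyMove, hcanddef, hrst])
          | false =>
            simp only [applyMove, hcanddef, hrst, if_false, Bool.false_eq_true]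
            rcases hrel' with h | ⟨h1, h2⟩
            · exact Or.inl h.symm
            · exact Or.inr ⟨h1, h2⟩
        · rw [hE1, hE2]
          cases hrst : G.reset m.δ with
          | true => simpa [applyMove, hcanddef, hrst] using abs_nonneg (ν - ν')
          | false =>
            simp only [applyMove, hcanddef, hrst, if_false, Bool.false_eq_true]
            have h1 : |e.2 + m.t - (e'.2 + G.trT e.1 e.2 e'.2 m.t)| ≤ |e'.2 - e.2| := by
              rw [abs_sub_comm]
              have := abs_nonneg (G.trT e.1 e.2 e'.2 m.t - m.t)
              linarith
            calc |e.2 + m.t - (e'.2 + G.trT e.1 e.2 e'.2 m.t)| ≤ |e'.2 - e.2| := h1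
              _ = |e.2 - e'.2| := abs_sub_comm _ _
              _ ≤ |ν - ν'| := ih8
        · rw [hE1, hE2, runC_append, runC_append, ← hedef, ← he'def]
          simp only [moveCost, hcanddef, ← ih6]
          have hq2 : |G.trT e.1 e.2 e'.2 m.t - m.t| +
              |e.2 + m.t - (e'.2 + G.trT e.1 e.2 e'.2 m.t)| ≤ |e.2 - e'.2| := by
            rw [abs_sub_comm (e.2 + m.t), abs_sub_comm e.2]
            exact hquant
          cases hrst : G.reset m.δ with
          | true =>
            simp only [applyMove, hrst, if_true, sub_self, abs_zero, sub_zero]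
            rw [show G.wL * |ν - ν'| = G.wL * (|ν - ν'| - 0) by ring]
            refine numeric_update ih9 ?_ hwt le_rfl
            have := abs_nonneg (e.2 + m.t - (e'.2 + G.trT e.1 e.2 e'.2 m.t))
            linarith
          | false =>
            simp only [applyMove, hrst, if_false, Bool.false_eq_true]
            exact numeric_update ih9 hq2 hwt (abs_nonneg _)
      · -- Max's turn
        have hd' : ¬G.deadlock (G.endConf (ℓ, ν') (G.pairHist σmin σmax' ℓ ν ν' n).2) :=
          fun h => hd ((deadlock_iff' hRF ih6 ih7).2 h)
        have hm' : ¬G.isMin (G.endConf (ℓ, ν') (G.pairHist σmin σmax' ℓ ν ν' n).2).1 :=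
          ih6 ▸ hm
        have hmax' : G.isMax (G.endConf (ℓ, ν') (G.pairHist σmin σmax' ℓ ν ν' n).2).1 := by
          rcases G.partition (G.endConf (ℓ, ν') (G.pairHist σmin σmax' ℓ ν ν' n).2).1 with
            ⟨h1, _, _⟩ | ⟨_, h2, _⟩ | ⟨_, _, h3⟩
          · exact absurd h1 hm'
          · exact h2
          · exact absurd (deadlock_of_isFin h3) hd'
        obtain ⟨m', hσ', hcm'⟩ := σmax'.legal (ℓ, ν') (G.pairHist σmin σmax' ℓ ν ν' n).2
          hvν' ih4 hmax' hd'
        have ih6s := ih6.symm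
        have ih7s : (G.endConf (ℓ, ν') (G.pairHist σmin σmax' ℓ ν ν' n).2).2 =
            (G.endConf (ℓ, ν) (G.pairHist σmin σmax' ℓ ν ν' n).1).2 ∨
            ((G.endConf (ℓ, ν') (G.pairHist σmin σmax' ℓ ν ν' n).2).2 ∈ R ∧
              (G.endConf (ℓ, ν) (G.pairHist σmin σmax' ℓ ν ν' n).1).2 ∈ R) := by
          tauto
        obtain ⟨hcm2, hquant, hrel'⟩ := translate' hRF ih6s ih7s hcm'
        rw [← ih6] at hcm2 hquant hrel'
        set e := G.endConf (ℓ, ν) (G.pairHist σmin σmax' ℓ ν ν' n).1 with hedef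
        set e' := G.endConf (ℓ, ν') (G.pairHist σmin σmax' ℓ ν ν' n).2 with he'def
        set cand : G.Move := ⟨G.trT e.1 e'.2 e.2 m'.t, m'.δ⟩ with hcanddef
        have hPH : G.pairHist σmin σmax' ℓ ν ν' (n + 1) =
            ((G.pairHist σmin σmax' ℓ ν ν' n).1 ++ [cand],
              (G.pairHist σmin σmax' ℓ ν ν' n).2 ++ [m']) := by
          simp only [pairHist]
          rw [if_neg hd, if_neg hm, hσ']
        have hcond : (ℓ, ν) = (ℓ, ν) ∧
            ∃ k, (G.pairHist σmin σmax' ℓ ν ν' k).1 =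
              (G.pairHist σmin σmax' ℓ ν ν' n).1 := ⟨rfl, n, rfl⟩
        have hfind : G.pairHist σmin σmax' ℓ ν ν' (Nat.find hcond.2) =
            G.pairHist σmin σmax' ℓ ν ν' n := by
          have h1 : Nat.find hcond.2 ≤ n := Nat.find_le rfl
          exact (pairHist_eq_of_fst_eq G σmin σmax' ℓ ν ν' h1
            (Nat.find_spec hcond.2).symm).symm
        have hmvmax : (G.maxTrans σmin σmax' ℓ ν ν').move (ℓ, ν)
            (G.pairHist σmin σmax' ℓ ν ν' n).1 = some cand := by
          simp only [maxTrans]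
          split
          · next h =>
              have hfd : G.pairHist σmin σmax' ℓ ν ν' (Nat.find h.2) =
                  G.pairHist σmin σmax' ℓ ν ν' n :=
                pairHist_eq_of_fst_eq G σmin σmax' ℓ ν ν' (Nat.find_le (h := h.2) rfl)
                  (Nat.find_spec h.2).symm |>.symm
              simp only [hfd, hσ']
              rw [← hedef, ← he'def]
              split
              · rfl
              · exact absurd hcm2 (by assumption)
          · next h => exact absurd ⟨trivial, n, rfl⟩ h
        have hh1 : G.hist σmin (G.maxTrans σmin σmax' ℓ ν ν') (ℓ, ν) (n + 1) =
            (G.pairHist σmin σmax' ℓ ν ν' n).1 ++ [cand] := by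
          show G.step _ _ _ (G.hist σmin (G.maxTrans σmin σmax' ℓ ν ν') (ℓ, ν) n) = _
          rw [step, ih1, if_neg hd, if_neg hm, hmvmax]
        have hh2 : G.hist (G.minTrans σmin ℓ ν ν') σmax' (ℓ, ν') (n + 1) =
            (G.pairHist σmin σmax' ℓ ν ν' n).2 ++ [m'] := by
          show G.step _ _ _ (G.hist (G.minTrans σmin ℓ ν ν') σmax' (ℓ, ν') n) = _
          rw [step, ih2, if_neg hd', if_neg hm', hσ']
        have hmr : G.mirror σmin ℓ ν ν'
            ((G.pairHist σmin σmax' ℓ ν ν' n).2 ++ [m']) =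
            (G.pairHist σmin σmax' ℓ ν ν' n).1 ++ [cand] := by
          rw [mirror_append, ih5]
          congr 1
          simp only [mstep]
          rw [← hedef, ← he'def, if_neg hm]
        have hE1 : G.endConf (ℓ, ν) ((G.pairHist σmin σmax' ℓ ν ν' n).1 ++ [cand]) =
            G.applyMove e cand := by rw [endConf_append, hedef]
        have hE2 : G.endConf (ℓ, ν') ((G.pairHist σmin σmax' ℓ ν ν' n).2 ++ [m']) =
            G.applyMove e' m' := by rw [endConf_append, he'def]
        have hwt : |(G.locWt e.1 : ℝ)| ≤ G.wL := by
          apply abs_locWt_le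
          rw [← hcm2.1]
          exact G.src_not_fin m'.δ
        rw [hPH]
        simp only
        refine ⟨hh1, hh2, validFrom_append.2 ⟨ih3, hcm2⟩,
          validFrom_append.2 ⟨ih4, hcm'⟩, hmr, ?_, ?_, ?_, ?_⟩
        · rw [hE1, hE2]; rfl
        · rw [hE1, hE2]
          cases hrst : G.reset m'.δ with
          | true => exact Or.inl (by simp [applyMove, hcanddef, hrst])
          | false =>
            simp only [applyMove, hcanddef, hrst, if_false, Bool.false_eq_true]
            rcases hrel' with h | ⟨h1, h2⟩
            · exact Or.inl h
            · exact Or.inr ⟨h2, h1⟩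
        · rw [hE1, hE2]
          cases hrst : G.reset m'.δ with
          | true => simpa [applyMove, hcanddef, hrst] using abs_nonneg (ν - ν')
          | false =>
            simp only [applyMove, hcanddef, hrst, if_false, Bool.false_eq_true]
            have h1 : |e.2 + G.trT e.1 e'.2 e.2 m'.t - (e'.2 + m'.t)| ≤ |e.2 - e'.2| := by
              have := abs_nonneg (G.trT e.1 e'.2 e.2 m'.t - m'.t)
              linarith
            exact h1.trans ih8
        · rw [hE1, hE2, runC_append, runC_append, ← hedef, ← he'def]
          simp only [moveCost, hcanddef, ← ih6]
          have hq2 : |m'.t - G.trT e.1 e'.2 e.2 m'.t| +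
              |e.2 + G.trT e.1 e'.2 e.2 m'.t - (e'.2 + m'.t)| ≤ |e.2 - e'.2| := by
            rw [abs_sub_comm m'.t]
            exact hquant
          cases hrst : G.reset m'.δ with
          | true =>
            simp only [applyMove, hrst, if_true, sub_self, abs_zero, sub_zero]
            rw [show G.wL * |ν - ν'| = G.wL * (|ν - ν'| - 0) by ring]
            refine numeric_update ih9 ?_ hwt le_rfl
            have := abs_nonneg (e.2 + G.trT e.1 e'.2 e.2 m'.t - (e'.2 + m'.t))
            linarith
          | false =>
            simp only [applyMove, hrst, if_false, Bool.false_eq_true]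
            exact numeric_update ih9 hq2 hwt (abs_nonneg _)
end Sim2

section Sim3

variable {G : PTG} (σmin : MinStrategy G) (σmax' : MaxStrategy G) (ℓ : G.Loc)
  (ν ν' : ℝ) {R : Set ℝ}

lemma playCost_le (hRF : RegionFacts G R) (hν : ν ∈ R) (hν' : ν' ∈ R) :
    G.playCost (ℓ, ν') (G.minTrans σmin ℓ ν ν') σmax' ≤
      G.playCost (ℓ, ν) σmin (G.maxTrans σmin σmax' ℓ ν ν') +
        (((G.wL + G.Kfin) * |ν - ν'| : ℝ) : EReal) := by
  have hiff : ∀ k,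
      G.isFin (G.endConf (ℓ, ν)
        (G.hist σmin (G.maxTrans σmin σmax' ℓ ν ν') (ℓ, ν) k)).1 ↔
      G.isFin (G.endConf (ℓ, ν')
        (G.hist (G.minTrans σmin ℓ ν ν') σmax' (ℓ, ν') k)).1 := by
    intro k
    obtain ⟨i1, i2, _, _, _, i6, _, _, _⟩ := invariant σmin σmax' ℓ ν ν' hRF hν hν' k
    rw [i1, i2, i6]
  rw [playCost, playCost]
  by_cases hex : ∃ k, G.isFin (G.endConf (ℓ, ν)
      (G.hist σmin (G.maxTrans σmin σmax' ℓ ν ν') (ℓ, ν) k)).1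
  · have hex' : ∃ k, G.isFin (G.endConf (ℓ, ν')
        (G.hist (G.minTrans σmin ℓ ν ν') σmax' (ℓ, ν') k)).1 :=
      ⟨Nat.find hex, (hiff _).1 (Nat.find_spec hex)⟩
    rw [dif_pos hex, dif_pos hex']
    have hfind : Nat.find hex' = Nat.find hex := by
      apply le_antisymm
      · exact Nat.find_le ((hiff _).1 (Nat.find_spec hex))
      · exact Nat.find_le ((hiff _).2 (Nat.find_spec hex'))
    rw [hfind]
    set k := Nat.find hex with hk
    obtain ⟨i1, i2, _, _, _, i6, _, i8, i9⟩ := invariant σmin σmax' ℓ ν ν' hRF hν hν' k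
    have hfin : G.isFin (G.endConf (ℓ, ν)
        (G.hist σmin (G.maxTrans σmin σmax' ℓ ν ν') (ℓ, ν) k)).1 := Nat.find_spec hex
    rw [i1] at hfin
    have hfin' : G.isFin (G.endConf (ℓ, ν') (G.pairHist σmin σmax' ℓ ν ν' k).2).1 :=
      i6 ▸ hfin
    rw [i1, i2, ← EReal.coe_add, EReal.coe_le_coe_iff]
    rw [finPrice_eq, finPrice_eq, if_pos hfin, if_pos hfin']
    simp only [finalCost]
    rw [← i6]
    set e := G.endConf (ℓ, ν) (G.pairHist σmin σmax' ℓ ν ν' k).1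
    set e' := G.endConf (ℓ, ν') (G.pairHist σmin σmax' ℓ ν ν' k).2
    have hd0 : (0:ℝ) ≤ |ν - ν'| := abs_nonneg _
    have hd : (0:ℝ) ≤ |e.2 - e'.2| := abs_nonneg _
    have hrc : |G.runC (ℓ, ν) (G.pairHist σmin σmax' ℓ ν ν' k).1 -
        G.runC (ℓ, ν') (G.pairHist σmin σmax' ℓ ν ν' k).2| ≤ G.wL * |ν - ν'| := by
      refine i9.trans ?_
      have hw := wL_nonneg (G := G)
      nlinarith
    have hsl : |(G.finSlope e.1 : ℝ)| ≤ G.Kfin := abs_finSlope_le hfin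
    have hφ : |((G.finSlope e.1 : ℝ) * e.2 + (G.finIntercept e.1 : ℝ)) -
        ((G.finSlope e.1 : ℝ) * e'.2 + (G.finIntercept e.1 : ℝ))| ≤
        G.Kfin * |ν - ν'| := by
      have h1 : ((G.finSlope e.1 : ℝ) * e.2 + (G.finIntercept e.1 : ℝ)) -
          ((G.finSlope e.1 : ℝ) * e'.2 + (G.finIntercept e.1 : ℝ)) =
          (G.finSlope e.1 : ℝ) * (e.2 - e'.2) := by ring
      rw [h1, abs_mul]
      have hK := Kfin_nonneg (G := G)
      have h2 := abs_nonneg ((G.finSlope e.1 : ℝ))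
      nlinarith
    have ha := abs_le.1 hrc
    have hb := abs_le.1 hφ
    linarith [ha.1, ha.2, hb.1, hb.2]
  · rw [dif_neg hex, EReal.top_add_coe]
    exact le_top

lemma val_le_val_add (hRF : RegionFacts G R) (hν : ν ∈ R) (hν' : ν' ∈ R) :
    G.val ℓ ν' ≤ G.val ℓ ν + (((G.wL + G.Kfin) * |ν - ν'| : ℝ) : EReal) := by
  rw [val, val, upperVal, upperVal]
  set c : ℝ := (G.wL + G.Kfin) * |ν - ν'| with hc
  have key : ∀ σmin : MinStrategy G,
      (⨅ σm : MinStrategy G, ⨆ σM : MaxStrategy G, G.playCost (ℓ, ν') σm σM) ≤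
        (⨆ σM : MaxStrategy G, G.playCost (ℓ, ν) σmin σM) + (c : EReal) := by
    intro σmin
    refine le_trans (iInf_le _ (G.minTrans σmin ℓ ν ν')) ?_
    refine iSup_le fun σmax' => ?_
    refine le_trans (playCost_le σmin σmax' ℓ ν ν' hRF hν hν') ?_
    exact add_le_add (le_iSup (fun σM => G.playCost (ℓ, ν) σmin σM) (G.maxTrans σmin σmax' ℓ ν ν')) le_rfl
  have key2 : ∀ σmin : MinStrategy G,
      (⨅ σm : MinStrategy G, ⨆ σM : MaxStrategy G, G.playCost (ℓ, ν') σm σM) -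
        (c : EReal) ≤ ⨆ σM : MaxStrategy G, G.playCost (ℓ, ν) σmin σM := by
    intro σmin
    rw [EReal.sub_le_iff_le_add (Or.inl (EReal.coe_ne_bot c))
      (Or.inl (EReal.coe_ne_top c))]
    exact key σmin
  have h3 : (⨅ σm : MinStrategy G, ⨆ σM : MaxStrategy G, G.playCost (ℓ, ν') σm σM) -
      (c : EReal) ≤ ⨅ σmin : MinStrategy G, ⨆ σM : MaxStrategy G,
        G.playCost (ℓ, ν) σmin σM := le_iInf key2
  rw [EReal.sub_le_iff_le_add (Or.inl (EReal.coe_ne_bot c))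
    (Or.inl (EReal.coe_ne_top c))] at h3
  exact h3

end Sim3

lemma eq_top_of_top_le_add_coe {x : EReal} {r : ℝ} (h : (⊤ : EReal) ≤ x + (r : EReal)) :
    x = ⊤ := by
  induction x with
  | bot =>
    rw [EReal.bot_add] at h
    exact absurd h (by simp)
  | coe y =>
    rw [← EReal.coe_add] at h
    exact absurd (top_le_iff.1 h) (EReal.coe_ne_top _)
  | top => rfl

lemma region_nonempty {R : Set ℝ} (hRF : RegionFacts G R) : R.Nonempty := hRF.nonempty
end PTG

open PTG in
/-- **Theorem: continuity of the value on regions.** For every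
one-clock PTG `G`, every region `r` and location `ℓ`, the value function
`ν ↦ Val_G(ℓ,ν)` restricted to `r` is either constantly `+∞`, constantly `-∞`, or
finite and continuous on `r`; moreover, in the finite case it is Lipschitz on `r`
with constant `w_L + K_fin`. -/
theorem ptg_value_continuous_on_regions (G : PTG) (R : Set ℝ) (hR : G.IsRegion R)
    (ℓ : G.Loc) :
    (∀ ν ∈ R, G.val ℓ ν = ⊤) ∨ (∀ ν ∈ R, G.val ℓ ν = ⊥) ∨
    ((∀ ν ∈ R, ∃ v : ℝ, G.val ℓ ν = (v : EReal)) ∧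
      ContinuousOn (fun ν => (G.val ℓ ν).toReal) R ∧
      ∀ ν ∈ R, ∀ ν' ∈ R,
        |(G.val ℓ ν).toReal - (G.val ℓ ν').toReal| ≤ (G.wL + G.Kfin) * |ν - ν'|) := by
  have hRF := isRegion_facts hR
  set C := G.wL + G.Kfin with hCdef
  have hC : 0 ≤ C := add_nonneg (wL_nonneg (G := G)) (Kfin_nonneg (G := G))
  have key : ∀ ν ∈ R, ∀ ν' ∈ R,
      G.val ℓ ν' ≤ G.val ℓ ν + ((C * |ν - ν'| : ℝ) : EReal) := fun ν hν ν' hν' =>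
    val_le_val_add ℓ ν ν' hRF hν hν'
  obtain ⟨ν₀, hν₀⟩ := hRF.nonempty
  by_cases htop : G.val ℓ ν₀ = ⊤
  · left
    intro ν hν
    have h := key ν hν ν₀ hν₀
    rw [htop] at h
    exact eq_top_of_top_le_add_coe (le_trans le_top h)
  by_cases hbot : G.val ℓ ν₀ = ⊥
  · right; left
    intro ν hν
    have h := key ν₀ hν₀ ν hν
    rw [hbot, EReal.bot_add] at h
    exact le_bot_iff.1 h
  · right; right
    -- finiteness
    have hfin : ∀ ν ∈ R, G.val ℓ ν ≠ ⊤ ∧ G.val ℓ ν ≠ ⊥ := by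
      intro ν hν
      constructor
      · intro h
        have hh := key ν₀ hν₀ ν hν
        rw [h] at hh
        exact htop (eq_top_of_top_le_add_coe (le_trans le_top hh))
      · intro h
        have hh := key ν hν ν₀ hν₀
        rw [h, EReal.bot_add] at hh
        exact hbot (le_bot_iff.1 hh)
    have hlipval : ∀ ν ∈ R, ∀ ν' ∈ R,
        |(G.val ℓ ν).toReal - (G.val ℓ ν').toReal| ≤ C * |ν - ν'| := by
      intro ν hν ν' hν'
      obtain ⟨hT, hB⟩ := hfin ν hν
      obtain ⟨hT', hB'⟩ := hfin ν' hν'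
      have h1 := key ν hν ν' hν'
      have h2 := key ν' hν' ν hν
      rw [← EReal.coe_toReal hT hB, ← EReal.coe_toReal hT' hB'] at h1 h2
      rw [← EReal.coe_add, EReal.coe_le_coe_iff] at h1 h2
      rw [abs_sub_comm ν' ν] at h2
      rw [abs_sub_le_iff]
      constructor <;> linarith
    refine ⟨?_, ?_, hlipval⟩
    · intro ν hν
      obtain ⟨hT, hB⟩ := hfin ν hν
      exact ⟨(G.val ℓ ν).toReal, (EReal.coe_toReal hT hB).symm⟩
    · have hlip : LipschitzOnWith (Real.toNNReal C)
          (fun ν => (G.val ℓ ν).toReal) R := by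
        apply LipschitzOnWith.of_dist_le_mul
        intro x hx y hy
        rw [Real.dist_eq, Real.dist_eq, Real.coe_toNNReal _ hC]
        exact hlipval x hx y hy
      exact hlip.continuousOn
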